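/- Assume T > K_m, m_{t−K_m, t} > 0 for every t ∈ {1, …, T}, and m_{s, s+1} > 0 for every s ∈ {T−K_m+1, …, T−1}. Then the set of all vectors (I_s)_{s = 1−K_m}^{T−1} ∈ ℝ^{T+K_m−1} satisfying Σ_{s = t−K_m}^{t−1} I_s·m_{s,t} = D_t for every t ∈ {1, …, T} is a nonempty affine subspace of ℝ^{T+K_m−1} of dimension K_m − 1. -/

import Mathlib

open Finset


noncomputable def gAux (m : ℤ → ℤ → ℝ) (D : ℤ → ℝ) (T Km : ℤ) : ℕ → ℝ
  | k =>
    if (k : ℤ) ≤ Km - 2 then 0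
    else (D (T - 1 - k + Km) -
        ∑ j ∈ (Finset.range k).attach,
          gAux m D T Km j.1 * m (T - 1 - (j.1 : ℤ)) (T - 1 - k + Km)) /
      m (T - 1 - k) (T - 1 - k + Km)
  decreasing_by exact Finset.mem_range.mp j.2

lemma gAux_solves (Km T : ℕ) (hKm : 1 ≤ Km) (hT : 1 ≤ T)
    (m : ℤ → ℤ → ℝ)
    (hm_zero : ∀ s t : ℤ, s ∈ Finset.Icc (1 - (Km : ℤ)) ((T : ℤ) - 1) →
      t ∈ Finset.Icc (1 : ℤ) (T : ℤ) → ¬(1 ≤ t - s ∧ t - s ≤ (Km : ℤ)) → m s t = 0)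
    (D : ℤ → ℝ) (hTKm : Km < T)
    (hm_pos : ∀ t ∈ Finset.Icc (1 : ℤ) (T : ℤ), 0 < m (t - Km) t) :
    ∀ t ∈ Finset.Icc (1 : ℤ) (T : ℤ),
      ∑ s ∈ Finset.Icc (t - (Km : ℤ)) (t - 1),
        gAux m D T Km ((T : ℤ) - 1 - s).toNat * m s t = D t := by
  intro t ht
  obtain ⟨ht1, ht2⟩ := Finset.mem_Icc.mp ht
  set k : ℕ := ((T : ℤ) - 1 + Km - t).toNat with hkdef
  have hkz : (k : ℤ) = (T : ℤ) - 1 + Km - t := Int.toNat_of_nonneg (by omega)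
  have stepA : ∑ s ∈ Finset.Icc (t - (Km : ℤ)) (t - 1),
        gAux m D T Km ((T : ℤ) - 1 - s).toNat * m s t
      = ∑ s ∈ Finset.Icc (t - (Km : ℤ)) ((T : ℤ) - 1),
        gAux m D T Km ((T : ℤ) - 1 - s).toNat * m s t := by
    apply Finset.sum_subset
    · apply Finset.Icc_subset_Icc_right; omega
    · intro x hx hx'
      rw [Finset.mem_Icc] at hx
      rw [Finset.mem_Icc] at hx'
      have hm0 : m x t = 0 := by
        apply hm_zero x t (Finset.mem_Icc.mpr (by omega)) ht
        omega
      rw [hm0, mul_zero]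
  have himg : Finset.Icc (t - (Km : ℤ)) ((T : ℤ) - 1)
      = (Finset.range (k + 1)).image (fun j : ℕ => (T : ℤ) - 1 - j) := by
    ext x
    simp only [Finset.mem_Icc, Finset.mem_image, Finset.mem_range]
    constructor
    · intro hx
      exact ⟨((T : ℤ) - 1 - x).toNat, by omega, by omega⟩
    · rintro ⟨j, hj, rfl⟩
      omega
  have stepB : ∑ s ∈ Finset.Icc (t - (Km : ℤ)) ((T : ℤ) - 1),
        gAux m D T Km ((T : ℤ) - 1 - s).toNat * m s t
      = ∑ j ∈ Finset.range (k + 1),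
        gAux m D T Km j * m ((T : ℤ) - 1 - j) t := by
    rw [himg, Finset.sum_image (by intro a _ b _ hab; have h' : (T : ℤ) - 1 - (a : ℤ) = (T : ℤ) - 1 - (b : ℤ) := hab; omega)]
    apply Finset.sum_congr rfl
    intro j _
    congr 1
    congr 1
    omega
  rw [stepA, stepB, Finset.sum_range_succ]
  have hne : m (t - Km) t ≠ 0 := ne_of_gt (hm_pos t ht)
  rw [gAux]
  rw [if_neg (by omega)]
  have e1 : (T : ℤ) - 1 - k + Km = t := by omega
  have e2 : (T : ℤ) - 1 - k = t - Km := by omega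
  rw [e1, e2, div_mul_cancel₀ _ hne, Finset.sum_attach (Finset.range k)
    (fun j => gAux m D T Km j * m ((T : ℤ) - 1 - (j : ℤ)) t)]
  ring


/-- If `T > K_m`, `m_{t−K_m,t} > 0` for all `t`, and `m_{s,s+1} > 0` for
`s = T−K_m+1, …, T−1`, then the set of solutions `(I_s)_{s=1−K_m}^{T−1} ∈ ℝ^{T+K_m−1}` of
the deconvolution equations is a nonempty affine subspace of dimension `K_m − 1`. -/
theorem deconvolution_solution_affine_subspace
    (Km T : ℕ) (hKm : 1 ≤ Km) (hT : 1 ≤ T)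
    (m : ℤ → ℤ → ℝ)
    (hm_nonneg : ∀ s t : ℤ, s ∈ Finset.Icc (1 - (Km : ℤ)) ((T : ℤ) - 1) →
      t ∈ Finset.Icc (1 : ℤ) (T : ℤ) → 0 ≤ m s t)
    (hm_zero : ∀ s t : ℤ, s ∈ Finset.Icc (1 - (Km : ℤ)) ((T : ℤ) - 1) →
      t ∈ Finset.Icc (1 : ℤ) (T : ℤ) → ¬(1 ≤ t - s ∧ t - s ≤ (Km : ℤ)) → m s t = 0)
    (D : ℤ → ℝ)
    (hTKm : Km < T)
    (hm_pos : ∀ t ∈ Finset.Icc (1 : ℤ) (T : ℤ), 0 < m (t - Km) t)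
    (hm_pos' : ∀ s ∈ Finset.Icc ((T : ℤ) - Km + 1) ((T : ℤ) - 1), 0 < m s (s + 1)) :
    ∃ A : AffineSubspace ℝ ({s : ℤ // s ∈ Finset.Icc (1 - (Km : ℤ)) ((T : ℤ) - 1)} → ℝ),
      (A : Set ({s : ℤ // s ∈ Finset.Icc (1 - (Km : ℤ)) ((T : ℤ) - 1)} → ℝ))
        = {I | ∀ t ∈ Finset.Icc (1 : ℤ) (T : ℤ),
            (∑ s : {s : ℤ // s ∈ Finset.Icc (1 - (Km : ℤ)) ((T : ℤ) - 1)},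
              if (s : ℤ) ∈ Finset.Icc (t - Km) (t - 1) then I s * m s t else 0) = D t} ∧
      (A : Set ({s : ℤ // s ∈ Finset.Icc (1 - (Km : ℤ)) ((T : ℤ) - 1)} → ℝ)).Nonempty ∧
      Module.finrank ℝ A.direction = Km - 1 := by
  classical
  set ι := {s : ℤ // s ∈ Finset.Icc (1 - (Km : ℤ)) ((T : ℤ) - 1)} with hι
  set κ := {t : ℤ // t ∈ Finset.Icc (1 : ℤ) (T : ℤ)} with hκ
  -- the linear map
  set L : (ι → ℝ) →ₗ[ℝ] (κ → ℝ) :=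
    { toFun := fun I t => ∑ s : ι,
        if (s : ℤ) ∈ Finset.Icc ((t : ℤ) - Km) ((t : ℤ) - 1) then I s * m s t else 0
      map_add' := by
        intro I J
        funext t
        rw [Pi.add_apply, ← Finset.sum_add_distrib]
        apply Finset.sum_congr rfl
        intro s _
        by_cases h : (s : ℤ) ∈ Finset.Icc ((t : ℤ) - Km) ((t : ℤ) - 1)
        · simp [h, add_mul]
        · simp [h]
      map_smul' := by
        intro c I
        funext t
        simp only [RingHom.id_apply, Pi.smul_apply, smul_eq_mul, Finset.mul_sum]
        apply Finset.sum_congr rfl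
        intro s _
        by_cases h : (s : ℤ) ∈ Finset.Icc ((t : ℤ) - Km) ((t : ℤ) - 1)
        · simp [h]; ring
        · simp [h] } with hL
  -- computation of L applied to a function built from an integer-indexed function
  have hLapp : ∀ (f : ℤ → ℝ) (t : κ),
      L (fun s : ι => f s) t = ∑ s ∈ Finset.Icc ((t : ℤ) - Km) ((t : ℤ) - 1), f s * m s t := by
    intro f t
    have hsub : Finset.Icc ((t : ℤ) - Km) ((t : ℤ) - 1)
        ⊆ Finset.Icc (1 - (Km : ℤ)) ((T : ℤ) - 1) := by
      obtain ⟨h1, h2⟩ := Finset.mem_Icc.mp t.2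
      apply Finset.Icc_subset_Icc <;> omega
    have h1 : (∑ s : ι, if (s : ℤ) ∈ Finset.Icc ((t : ℤ) - Km) ((t : ℤ) - 1)
        then f s * m s t else 0)
        = ∑ s ∈ Finset.Icc (1 - (Km : ℤ)) ((T : ℤ) - 1),
          (if s ∈ Finset.Icc ((t : ℤ) - Km) ((t : ℤ) - 1) then f s * m s t else 0) :=
      (Finset.sum_subtype _ (fun x => Iff.rfl)
        (fun s => if s ∈ Finset.Icc ((t : ℤ) - Km) ((t : ℤ) - 1) then f s * m s t else 0)).symm
    show (∑ s : ι, if (s : ℤ) ∈ Finset.Icc ((t : ℤ) - Km) ((t : ℤ) - 1)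
        then f s * m s t else 0) = _
    rw [h1, Finset.sum_ite_mem, Finset.inter_eq_right.mpr hsub]
  -- surjectivity
  have key : ∀ d : κ → ℝ, ∃ I : ι → ℝ, L I = d := by
    intro d
    set Dext : ℤ → ℝ := fun t => if h : t ∈ Finset.Icc (1 : ℤ) (T : ℤ) then d ⟨t, h⟩ else 0
      with hDext
    refine ⟨fun s : ι => gAux m Dext T Km ((T : ℤ) - 1 - (s : ℤ)).toNat, ?_⟩
    funext t
    rw [hLapp (fun s => gAux m Dext T Km ((T : ℤ) - 1 - s).toNat) t]
    rw [gAux_solves Km T hKm hT m hm_zero Dext hTKm hm_pos t t.2]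
    show Dext ↑t = d t
    have h2 : Dext ↑t = d ⟨↑t, t.2⟩ := dif_pos t.2
    rw [h2]
  obtain ⟨I₀, hI₀⟩ := key (fun t => D t)
  refine ⟨AffineSubspace.mk' I₀ (LinearMap.ker L), ?_, ?_, ?_⟩
  · ext x
    simp only [AffineSubspace.mem_coe, AffineSubspace.mem_mk',
      LinearMap.mem_ker, Set.mem_setOf_eq]
    have hx : x -ᵥ I₀ = x - I₀ := rfl
    rw [hx, map_sub, sub_eq_zero, hI₀]
    constructor
    · intro h t ht
      exact congrFun h ⟨t, ht⟩
    · intro h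
      funext t
      exact h t t.2
  · exact ⟨I₀, AffineSubspace.self_mem_mk' I₀ _⟩
  · rw [AffineSubspace.direction_mk']
    have hcard₁ : Fintype.card ι = T + Km - 1 := by
      calc Fintype.card ι = ((T : ℤ) - 1 + 1 - (1 - Km)).toNat := by
            rw [← Int.card_Icc]; exact Fintype.card_coe _
        _ = T + Km - 1 := by omega
    have hcard₂ : Fintype.card κ = T := by
      calc Fintype.card κ = ((T : ℤ) + 1 - 1).toNat := by
            rw [← Int.card_Icc]; exact Fintype.card_coe _
        _ = T := by omega
    have hrank := LinearMap.finrank_range_add_finrank_ker L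
    rw [LinearMap.range_eq_top.mpr (fun d => key d)] at hrank
    rw [finrank_top, Module.finrank_pi, Module.finrank_pi, hcard₁, hcard₂] at hrank
    have h3 : T + Km - 1 = T + (Km - 1) := by omega
    rw [h3] at hrank
    exact Nat.add_left_cancel hrank
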